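/- For every η > 0, the convex cone K of functions W ∈ L²(ℝ) that are even, nonnegative, and unimodal (monotonically increasing on x < 0 and decreasing on x > 0) is invariant under A_η: if W ∈ K then A_η W ∈ K. -/

import Mathlib

open MeasureTheory intervalIntegral
open scoped ENNReal

/-- The averaging operator `(A_η W)(x) = (1/η) ∫_{x-η/2}^{x+η/2} W(y) dy`. -/
noncomputable def Aop (η : ℝ) (W : ℝ → ℝ) : ℝ → ℝ :=
  fun x => (1 / η) * ∫ y in (x - η / 2)..(x + η / 2), W y

section aux
variable {W : ℝ → ℝ} {η : ℝ}

lemma key_mono (heven : ∀ x, W (-x) = W x) (hmono : MonotoneOn W (Set.Iic 0))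
    {a b : ℝ} (hab : |a| ≤ |b|) : W b ≤ W a := by
  have hrep : ∀ x : ℝ, W x = W (-|x|) := by
    intro x
    rcases le_or_gt 0 x with h | h
    · rw [abs_of_nonneg h, heven x]
    · rw [abs_of_neg h, neg_neg]
  rw [hrep a, hrep b]
  exact hmono (by simp) (by simp) (by simpa using hab)


lemma intInt (hL2 : MemLp W 2 (volume : Measure ℝ)) (a b : ℝ) :
    IntervalIntegrable W volume a b := by
  rw [intervalIntegrable_iff]
  have hfin : volume (Set.uIoc a b) < ⊤ := measure_Ioc_lt_top
  haveI := Fact.mk hfin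
  exact memLp_one_iff_integrable.mp
    ((hL2.restrict _).mono_exponent (by norm_num))


lemma Aop_nonneg (hη : 0 < η) (hpos : ∀ x, 0 ≤ W x) (x : ℝ) : 0 ≤ Aop η W x := by
  unfold Aop
  apply mul_nonneg (by positivity)
  exact integral_nonneg (by linarith) (fun u _ => hpos u)


lemma Aop_even (heven : ∀ x, W (-x) = W x) (x : ℝ) : Aop η W (-x) = Aop η W x := by
  unfold Aop
  congr 1
  have : ∀ y, W y = W (-y) := fun y => (heven y).symm
  rw [show (∫ y in (-x - η/2)..(-x + η/2), W y) = ∫ y in (-x - η/2)..(-x + η/2), W (-y) from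
    integral_congr (fun y _ => this y), integral_comp_neg]
  congr 1 <;> ring


lemma Aop_mono (hη : 0 < η) (hL2 : MemLp W 2 (volume : Measure ℝ))
    (heven : ∀ x, W (-x) = W x) (hmono : MonotoneOn W (Set.Iic 0)) :
    MonotoneOn (Aop η W) (Set.Iic 0) := by
  intro x hx x' hx' hxx'
  simp only [Set.mem_Iic] at hx hx'
  set h := η / 2 with hh
  have hint : ∀ a b : ℝ, IntervalIntegrable W volume a b := intInt hL2
  have e1 : (∫ y in (x - h)..(x + h), W y) + ∫ y in (x + h)..(x' + h), W y
      = ∫ y in (x - h)..(x' + h), W y := integral_add_adjacent_intervals (hint _ _) (hint _ _)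
  have e2 : (∫ y in (x - h)..(x' - h), W y) + ∫ y in (x' - h)..(x' + h), W y
      = ∫ y in (x - h)..(x' + h), W y := integral_add_adjacent_intervals (hint _ _) (hint _ _)
  have e3 : (∫ y in (x + h)..(x' + h), W y) = ∫ y in (x - h)..(x' - h), W (y + η) := by
    rw [integral_comp_add_right (fun y => W y) η]
    congr 1 <;> ring
  have e4 : (∫ y in (x - h)..(x' - h), W y) ≤ ∫ y in (x - h)..(x' - h), W (y + η) := by
    apply integral_mono_on (by linarith) (hint _ _)
    · have h5 := (hint (x + h) (x' + h)).comp_add_right η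
      rw [show x - h = x + h - η by rw [hh]; ring, show x' - h = x' + h - η by rw [hh]; ring]
      exact h5
    · intro y hy
      obtain ⟨hy1, hy2⟩ := hy
      apply key_mono heven hmono
      have hyneg : y ≤ -h := by linarith
      rw [show |y| = -y from abs_of_nonpos (by linarith), abs_le]
      constructor <;> linarith
  have goal2 : (∫ y in (x - h)..(x + h), W y) ≤ ∫ y in (x' - h)..(x' + h), W y := by
    linarith [e1, e2, e3, e4]
  unfold Aop
  have : (0:ℝ) ≤ 1 / η := by positivity
  exact mul_le_mul_of_nonneg_left goal2 this


lemma Aop_anti (hη : 0 < η) (hL2 : MemLp W 2 (volume : Measure ℝ))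
    (heven : ∀ x, W (-x) = W x) (hmono : MonotoneOn W (Set.Iic 0)) :
    AntitoneOn (Aop η W) (Set.Ici 0) := by
  intro x hx x' hx' hxx'
  simp only [Set.mem_Ici] at hx hx'
  have := Aop_mono (W := W) hη hL2 heven hmono (a := -x') (b := -x)
  rw [← Aop_even (η := η) heven x, ← Aop_even (η := η) heven x']
  exact Aop_mono hη hL2 heven hmono (Set.mem_Iic.mpr (by linarith))
    (Set.mem_Iic.mpr (by linarith)) (by linarith)


lemma Aop_continuous (hL2 : MemLp W 2 (volume : Measure ℝ)) : Continuous (Aop η W) := by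
  have hint : ∀ a b : ℝ, IntervalIntegrable W volume a b := intInt hL2
  have key : ∀ x : ℝ, Aop η W x
      = (1/η) * ((∫ y in (0:ℝ)..(x + η/2), W y) - ∫ y in (0:ℝ)..(x - η/2), W y) := by
    intro x
    unfold Aop
    congr 1
    rw [← integral_add_adjacent_intervals (hint (x - η/2) 0) (hint 0 (x + η/2)),
      integral_symm]
    ring
  rw [show Aop η W = _ from funext key]
  have hc := continuous_primitive (fun a b => hint a b) 0
  exact continuous_const.mul ((hc.comp (continuous_id.add continuous_const)).sub
    (hc.comp (continuous_id.sub continuous_const)))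


lemma Aop_memL2 (hη : 0 < η) (hL2 : MemLp W 2 (volume : Measure ℝ))
    (hpos : ∀ x, 0 ≤ W x) : MemLp (Aop η W) 2 (volume : Measure ℝ) := by
  have hint : ∀ a b : ℝ, IntervalIntegrable W volume a b := intInt hL2
  refine ⟨(Aop_continuous hL2).aestronglyMeasurable, ?_⟩
  rw [eLpNorm_eq_lintegral_rpow_enorm_toReal (by norm_num) (by norm_num)]
  have htR : (2 : ℝ≥0∞).toReal = (2:ℝ) := by norm_num
  rw [htR]
  refine ENNReal.rpow_lt_top_of_nonneg (by norm_num) (ne_of_lt ?_)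
  -- measurable version of ofReal ∘ W
  set g : ℝ → ℝ≥0∞ := fun y => ENNReal.ofReal (W y) with hgdef
  have hg : AEMeasurable g volume :=
    ENNReal.measurable_ofReal.comp_aemeasurable hL2.1.aemeasurable
  set φ : ℝ → ℝ≥0∞ := hg.mk g with hφdef
  have hφm : Measurable φ := hg.measurable_mk
  have hφ : g =ᵐ[volume] φ := hg.ae_eq_mk
  set m : ℝ≥0∞ := ENNReal.ofReal η with hm
  have hm_ne : m ≠ ⊤ := ENNReal.ofReal_ne_top
  set C : ℝ → ℝ≥0∞ := fun x => ∫⁻ y in Set.Ioc (x - η/2) (x + η/2), φ y ^ (2:ℝ) with hC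
  -- the L² norm of W as a lintegral
  have hI2 : (∫⁻ y, (‖W y‖₊ : ℝ≥0∞) ^ (2:ℝ)) < ⊤ := by
    have := lintegral_rpow_enorm_lt_top_of_eLpNorm_lt_top (f := W) (μ := volume)
      (p := 2) (by norm_num) (by norm_num) hL2.2
    rw [htR] at this; exact this
  have hgW : ∀ y, (‖W y‖₊ : ℝ≥0∞) = g y := fun y => Real.enorm_eq_ofReal (hpos y)
  have hIφ : (∫⁻ y, φ y ^ (2:ℝ)) < ⊤ := by
    have he : (∫⁻ y, φ y ^ (2:ℝ)) = ∫⁻ y, (‖W y‖₊ : ℝ≥0∞) ^ (2:ℝ) := by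
      refine lintegral_congr_ae ?_
      filter_upwards [hφ] with y hy
      rw [hgW, hy]
    rw [he]; exact hI2
  -- pointwise bound
  have hpt : ∀ x : ℝ, (‖Aop η W x‖₊ : ℝ≥0∞) ^ (2:ℝ)
      ≤ (ENNReal.ofReal (1/η) ^ (2:ℝ) * m) * C x := by
    intro x
    have hab : x - η/2 ≤ x + η/2 := by linarith
    have h1 : (‖Aop η W x‖₊ : ℝ≥0∞) = ENNReal.ofReal (Aop η W x) :=
      Real.enorm_eq_ofReal (Aop_nonneg hη hpos x)
    have h2 : ENNReal.ofReal (Aop η W x)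
        = ENNReal.ofReal (1/η) * ∫⁻ y in Set.Ioc (x - η/2) (x + η/2), φ y := by
      show ENNReal.ofReal ((1/η) * ∫ y in (x - η/2)..(x + η/2), W y) = _
      rw [ENNReal.ofReal_mul (by positivity), intervalIntegral.integral_of_le hab,
        ofReal_integral_eq_lintegral_ofReal ((hint _ _).1) (ae_of_all _ hpos)]
      congr 1
      exact lintegral_congr_ae (ae_restrict_of_ae hφ)
    have hvol : volume (Set.Ioc (x - η/2) (x + η/2)) = m := by
      rw [Real.volume_Ioc, hm]
      congr 1
      ring
    have hcs : (∫⁻ y in Set.Ioc (x - η/2) (x + η/2), φ y)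
        ≤ C x ^ (1/2 : ℝ) * m ^ (1/2 : ℝ) := by
      have hconj : Real.HolderConjugate 2 2 := Real.HolderConjugate.two_two
      have hh := ENNReal.lintegral_mul_le_Lp_mul_Lq
        (volume.restrict (Set.Ioc (x - η/2) (x + η/2))) hconj
        hφm.aemeasurable (aemeasurable_const (b := (1:ℝ≥0∞)))
      simp only [Pi.mul_apply, mul_one, ENNReal.one_rpow, lintegral_const,
        Measure.restrict_apply, MeasurableSet.univ, Set.univ_inter, one_mul] at hh
      rw [hvol] at hh
      exact hh
    calc (‖Aop η W x‖₊ : ℝ≥0∞) ^ (2:ℝ)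
        ≤ (ENNReal.ofReal (1/η) * (C x ^ (1/2 : ℝ) * m ^ (1/2 : ℝ))) ^ (2:ℝ) := by
          rw [h1]
          exact ENNReal.rpow_le_rpow (by rw [h2]; exact mul_le_mul_right hcs _) (by norm_num)
      _ = (ENNReal.ofReal (1/η) ^ (2:ℝ) * m) * C x := by
          rw [ENNReal.mul_rpow_of_nonneg _ _ (by norm_num),
            ENNReal.mul_rpow_of_nonneg _ _ (by norm_num),
            ← ENNReal.rpow_mul, ← ENNReal.rpow_mul]
          norm_num
          ring
  -- Tonelli: total mass of C
  have hswap : (∫⁻ x, C x) = (∫⁻ y, φ y ^ (2:ℝ)) * m := by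
    set S : Set (ℝ × ℝ) := {q : ℝ × ℝ | q.1 - η/2 < q.2 ∧ q.2 ≤ q.1 + η/2} with hS
    have hSm : MeasurableSet S :=
      ((measurableSet_lt (measurable_fst.sub measurable_const) measurable_snd).inter
        (measurableSet_le measurable_snd (measurable_fst.add measurable_const)))
    set k : ℝ × ℝ → ℝ≥0∞ := S.indicator (fun q => φ q.2 ^ (2:ℝ)) with hk
    have hkm : Measurable k :=
      ((hφm.comp measurable_snd).pow measurable_const).indicator hSm
    have h1 : ∀ x, C x = ∫⁻ y, k (x, y) := by
      intro x
      show (∫⁻ y in Set.Ioc (x - η/2) (x + η/2), φ y ^ (2:ℝ)) = _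
      rw [← lintegral_indicator measurableSet_Ioc]
      refine lintegral_congr fun y => ?_
      simp only [hk, Set.indicator_apply, Set.mem_Ioc, Set.mem_setOf_eq, hS]
    have h2 : ∀ y : ℝ, (∫⁻ x, k (x, y)) = φ y ^ (2:ℝ) * m := by
      intro y
      have hset : {x : ℝ | (x, y) ∈ S} = Set.Ico (y - η/2) (y + η/2) := by
        ext x
        simp only [hS, Set.mem_setOf_eq, Set.mem_Ico]
        constructor <;> rintro ⟨h1, h2⟩ <;> constructor <;> linarith
      have : (fun x : ℝ => k (x, y)) = Set.indicator {x : ℝ | (x, y) ∈ S} (fun _ => φ y ^ (2:ℝ)) := by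
        funext x
        simp only [hk, Set.indicator_apply, Set.mem_setOf_eq]
      rw [this, hset, lintegral_indicator measurableSet_Ico, setLIntegral_const,
        Real.volume_Ico, hm]
      congr 2
      ring
    calc (∫⁻ x, C x) = ∫⁻ x, ∫⁻ y, k (x, y) := by
          refine lintegral_congr fun x => h1 x
      _ = ∫⁻ y, ∫⁻ x, k (x, y) := lintegral_lintegral_swap hkm.aemeasurable
      _ = ∫⁻ y, φ y ^ (2:ℝ) * m := lintegral_congr fun y => h2 y
      _ = (∫⁻ y, φ y ^ (2:ℝ)) * m := lintegral_mul_const' m _ hm_ne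
  calc (∫⁻ x, (‖Aop η W x‖₊ : ℝ≥0∞) ^ (2:ℝ))
      ≤ ∫⁻ x, (ENNReal.ofReal (1/η) ^ (2:ℝ) * m) * C x := lintegral_mono hpt
    _ = (ENNReal.ofReal (1/η) ^ (2:ℝ) * m) * ∫⁻ x, C x := by
        exact lintegral_const_mul' _ _ (by
          exact ENNReal.mul_ne_top
            (by simp [ENNReal.rpow_eq_top_iff, ENNReal.ofReal_ne_top]) hm_ne)
    _ = (ENNReal.ofReal (1/η) ^ (2:ℝ) * m) * ((∫⁻ y, φ y ^ (2:ℝ)) * m) := by rw [hswap]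
    _ < ⊤ := by
        refine ENNReal.mul_lt_top ?_ (ENNReal.mul_lt_top hIφ hm_ne.lt_top)
        exact ENNReal.mul_lt_top
          (ENNReal.rpow_lt_top_of_nonneg (by norm_num) ENNReal.ofReal_ne_top) hm_ne.lt_top

end aux

theorem stmt5 (η : ℝ) (hη : 0 < η) (W : ℝ → ℝ)
    (hL2 : MemLp W 2 (volume : Measure ℝ))
    (heven : ∀ x, W (-x) = W x)
    (hpos : ∀ x, 0 ≤ W x)
    (hmono : MonotoneOn W (Set.Iic 0))
    (hanti : AntitoneOn W (Set.Ici 0)) :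
    MemLp (Aop η W) 2 (volume : Measure ℝ) ∧
    (∀ x, Aop η W (-x) = Aop η W x) ∧
    (∀ x, 0 ≤ Aop η W x) ∧
    MonotoneOn (Aop η W) (Set.Iic 0) ∧
    AntitoneOn (Aop η W) (Set.Ici 0) :=
  ⟨Aop_memL2 hη hL2 hpos, Aop_even heven, Aop_nonneg hη hpos,
    Aop_mono hη hL2 heven hmono, Aop_anti hη hL2 heven hmono⟩
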